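/- The resolvent series of H and of H^{[1]} satisfy the following identities in ℂ((z^{−1})): (i) φ_{0,0}(z)·(z − a_0^{(0)} − Σ_{i=1}^{q} Σ_{j=1}^{p} a_0^{(i)} a_0^{(−j)} φ^{(1)}_{i−1,j−1}(z)) = 1; (ii) for every j ≥ 1, φ_{0,j}(z) = φ_{0,0}(z)·Σ_{i=1}^{q} a_0^{(i)} φ^{(1)}_{i−1,j−1}(z); (iii) for every i ≥ 1, φ_{i,0}(z) = φ_{0,0}(z)·Σ_{j=1}^{p} a_0^{(−j)} φ^{(1)}_{i−1,j−1}(z); (iv) for all i, j ≥ 1, φ_{0,0}(z)·φ_{i,j}(z) = φ_{i,0}(z)·φ_{0,j}(z) + φ_{0,0}(z)·φ^{(1)}_{i−1,j−1}(z). -/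

import Mathlib

open scoped BigOperators
open Finset

noncomputable section

/-- The field `ℂ((z⁻¹))`, realized as Laurent series in the variable `t = z⁻¹`. -/
abbrev LS : Type := LaurentSeries ℂ

/-- The element `z` of `ℂ((z⁻¹))` (i.e. `t⁻¹`). -/
def zLS : LS := HahnSeries.single (-1 : ℤ) (1 : ℂ)

/-- Constant (scalar) Laurent series. -/
def CLS (c : ℂ) : LS := HahnSeries.C c

/-- The generating series `Σ_{n ≥ 0} c n · z^{-n-1}` in `ℂ((z⁻¹))`. -/
def gen (c : ℕ → ℂ) : LS :=
  HahnSeries.single (1 : ℤ) (1 : ℂ) * (HahnSeries.ofPowerSeries ℤ ℂ) (PowerSeries.mk c)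

/-- Weight of a step of displacement `s` starting at height `h`:
`a_h^{(s)}` if `s ≥ 0`, and `a_{h+s}^{(s)}` if `s < 0`.  (Here `a k n = aₙ⁽ᵏ⁾`.) -/
def stepW (a : ℤ → ℤ → ℂ) (h s : ℤ) : ℂ := if 0 ≤ s then a s h else a s (h + s)

/-- Extend a finite step sequence by zero. -/
def ext {n : ℕ} (s : Fin n → ℤ) : ℕ → ℤ := fun t => if h : t < n then s ⟨t, h⟩ else 0

/-- Height after `k` steps, starting at height `i`. -/
def hgt (i : ℤ) (σ : ℕ → ℤ) (k : ℕ) : ℤ := i + ∑ t ∈ Finset.range k, σ t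

/-- Weight of the lattice path of length `n` starting at height `i` with steps `σ`. -/
def wgt (a : ℤ → ℤ → ℂ) (n : ℕ) (i : ℤ) (σ : ℕ → ℤ) : ℂ :=
  ∏ k ∈ Finset.range n, stepW a (hgt i σ k) (σ k)

/-- All admissible step sequences of length `n` (each step in `[-p, q]`). -/
def steps (p q n : ℕ) : Finset (Fin n → ℤ) :=
  Fintype.piFinset fun _ => Finset.Icc (-(p : ℤ)) (q : ℤ)

/-- `A_{[n,i,j]}`: weight polynomial of paths of length `n` from `(0,i)` to `(n,j)`
staying at height `≥ 0`. -/
def Apoly (p q : ℕ) (a : ℤ → ℤ → ℂ) (n : ℕ) (i j : ℤ) : ℂ :=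
  ∑ s ∈ steps p q n,
    if hgt i (ext s) n = j ∧ ∀ k ≤ n, 0 ≤ hgt i (ext s) k then wgt a n i (ext s) else 0

/-- `W_{[n,i,j]}`: weight polynomial of unrestricted paths of length `n` from `(0,i)` to `(n,j)`. -/
def Wpoly (p q : ℕ) (a : ℤ → ℤ → ℂ) (n : ℕ) (i j : ℤ) : ℂ :=
  ∑ s ∈ steps p q n, if hgt i (ext s) n = j then wgt a n i (ext s) else 0

/-- `V_{[n,i,j]}`: weight polynomial of paths of length `n` from `(0,i)` to `(n,j)`
staying at height `≤ -1`. -/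
def Vpoly (p q : ℕ) (a : ℤ → ℤ → ℂ) (n : ℕ) (i j : ℤ) : ℂ :=
  ∑ s ∈ steps p q n,
    if hgt i (ext s) n = j ∧ ∀ k ≤ n, hgt i (ext s) k ≤ -1 then wgt a n i (ext s) else 0

/-- `A_{[ℓ,i,j,N]}`: weight polynomial of paths of length `ℓ` from `(0,i)` to `(ℓ,j)`
with all heights in `{0, …, N-1}`. -/
def Aboxpoly (p q : ℕ) (a : ℤ → ℤ → ℂ) (N ℓ : ℕ) (i j : ℤ) : ℂ :=
  ∑ s ∈ steps p q ℓ,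
    if hgt i (ext s) ℓ = j ∧ ∀ k ≤ ℓ, 0 ≤ hgt i (ext s) k ∧ hgt i (ext s) k ≤ (N : ℤ) - 1
    then wgt a ℓ i (ext s) else 0

/-- The generating series `A_{i,j}(z)`. -/
def Aser (p q : ℕ) (a : ℤ → ℤ → ℂ) (i j : ℤ) : LS := gen fun n => Apoly p q a n i j

/-- The generating series `W_{i,j}(z)`. -/
def Wser (p q : ℕ) (a : ℤ → ℤ → ℂ) (i j : ℤ) : LS := gen fun n => Wpoly p q a n i j

/-- The generating series `V_{i,j}(z)`. -/
def Vser (p q : ℕ) (a : ℤ → ℤ → ℂ) (i j : ℤ) : LS := gen fun n => Vpoly p q a n i j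


/-- The one-sided banded matrix `H`: `h_{i,j} = a_{min(i,j)}^{(j-i)}` when `-p ≤ j-i ≤ q`. -/
def Hmat (p q : ℕ) (a : ℤ → ℤ → ℂ) (i j : ℕ) : ℂ :=
  if -(p : ℤ) ≤ (j : ℤ) - (i : ℤ) ∧ (j : ℤ) - (i : ℤ) ≤ (q : ℤ) then
    a ((j : ℤ) - (i : ℤ)) (min (i : ℤ) (j : ℤ)) else 0

/-- Entrywise power of a one-sided matrix whose rows are supported on `[0, i + B]`:
`(M^n)_{i,j}`. -/
def onePow (M : ℕ → ℕ → ℂ) (B : ℕ) : ℕ → ℕ → ℕ → ℂ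
  | 0, i, j => if i = j then 1 else 0
  | n + 1, i, j => ∑ r ∈ Finset.range (i + B + 1), M i r * onePow M B n r j

/-- `φ_{i,j}(z)`: resolvent series of the one-sided banded matrix `H`. -/
def phiSer (p q : ℕ) (a : ℤ → ℤ → ℂ) (i j : ℕ) : LS :=
  gen fun n => onePow (Hmat p q a) q n i j

/-- `φ⁽¹⁾_{i,j}(z)`: resolvent series of `H^{[1]}` (delete first row and column of `H`). -/
def phiSer1 (p q : ℕ) (a : ℤ → ℤ → ℂ) (i j : ℕ) : LS :=
  gen fun n => onePow (fun i' j' => Hmat p q a (i' + 1) (j' + 1)) q n i j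

lemma gen_mul_gen (c d : ℕ → ℂ) :
    gen c * gen d = gen (fun n => ∑ k ∈ range n, c k * d (n - 1 - k)) := by
  have h : PowerSeries.mk (fun n => ∑ k ∈ range n, c k * d (n - 1 - k))
      = PowerSeries.X * (PowerSeries.mk c * PowerSeries.mk d) := by
    ext n
    cases n with
    | zero => simp
    | succ m =>
      rw [PowerSeries.coeff_mk, PowerSeries.coeff_succ_X_mul, PowerSeries.coeff_mul,
        Finset.Nat.sum_antidiagonal_eq_sum_range_succ_mk]
      simp
  unfold gen
  rw [h, map_mul, map_mul, HahnSeries.ofPowerSeries_X]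
  ring

lemma CLS_mul_gen (α : ℂ) (c : ℕ → ℂ) : CLS α * gen c = gen (fun n => α * c n) := by
  have h : PowerSeries.mk (fun n => α * c n) = PowerSeries.C α * PowerSeries.mk c := by
    ext n; simp [PowerSeries.coeff_C_mul]
  unfold CLS gen
  rw [h, map_mul, HahnSeries.ofPowerSeries_C]
  ring

lemma zLS_mul_gen (c : ℕ → ℂ) :
    zLS * gen c = CLS (c 0) + gen (fun n => c (n + 1)) := by
  have h : PowerSeries.mk c
      = PowerSeries.C (c 0) + PowerSeries.X * PowerSeries.mk (fun n => c (n+1)) := by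
    ext n
    cases n with
    | zero => simp
    | succ m => simp [PowerSeries.coeff_succ_X_mul, PowerSeries.coeff_C]
  have e : (HahnSeries.single (-1:ℤ) (1:ℂ)) * HahnSeries.single 1 1 = 1 := by
    rw [HahnSeries.single_mul_single, neg_add_cancel, one_mul, HahnSeries.single_zero_one]
  unfold zLS gen CLS
  rw [← mul_assoc, e, one_mul, h, map_add, map_mul, HahnSeries.ofPowerSeries_X,
    HahnSeries.ofPowerSeries_C]

lemma gen_sum {ι : Type*} (s : Finset ι) (f : ι → ℕ → ℂ) :
    ∑ x ∈ s, gen (f x) = gen (fun n => ∑ x ∈ s, f x n) := by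
  have h : PowerSeries.mk (fun n => ∑ x ∈ s, f x n) = ∑ x ∈ s, PowerSeries.mk (f x) := by
    ext n; simp
  unfold gen
  rw [h, map_sum, Finset.mul_sum]

lemma gen_add (c d : ℕ → ℂ) : gen c + gen d = gen (fun n => c n + d n) := by
  have h : PowerSeries.mk (fun n => c n + d n) = PowerSeries.mk c + PowerSeries.mk d := by
    ext n; simp
  unfold gen; rw [h, map_add, mul_add]

lemma gen_sub (c d : ℕ → ℂ) : gen c - gen d = gen (fun n => c n - d n) := by
  have h : PowerSeries.mk (fun n => c n - d n) = PowerSeries.mk c - PowerSeries.mk d := by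
    ext n; simp
  unfold gen; rw [h, map_sub, mul_sub]

lemma gen_zero : gen (fun _ => 0) = 0 := by
  have h : PowerSeries.mk (fun _ => (0:ℂ)) = 0 := by ext n; simp
  unfold gen; rw [h, map_zero, mul_zero]

lemma CLS_one : CLS 1 = 1 := by simp [CLS]

/-! Coefficient abbreviations -/

def cc (p q : ℕ) (a : ℤ → ℤ → ℂ) (n i j : ℕ) : ℂ := onePow (Hmat p q a) q n i j
def cc1 (p q : ℕ) (a : ℤ → ℤ → ℂ) (n i j : ℕ) : ℂ :=
  onePow (fun i' j' => Hmat p q a (i' + 1) (j' + 1)) q n i j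

section CoeffLemmas
variable (p q : ℕ) (a : ℤ → ℤ → ℂ)

lemma phiSer_apply (i j : ℕ) : phiSer p q a i j = gen (fun n => cc p q a n i j) := rfl
lemma phiSer1_apply (i j : ℕ) : phiSer1 p q a i j = gen (fun n => cc1 p q a n i j) := rfl

lemma cc_zero (i j : ℕ) : cc p q a 0 i j = if i = j then 1 else 0 := rfl
lemma cc1_zero (i j : ℕ) : cc1 p q a 0 i j = if i = j then 1 else 0 := rfl

lemma cc_succ (n i j : ℕ) :
    cc p q a (n+1) i j = ∑ r ∈ range (i + q + 1), Hmat p q a i r * cc p q a n r j := rfl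

lemma cc1_succ (n i j : ℕ) :
    cc1 p q a (n+1) i j
      = ∑ r ∈ range (i + q + 1), Hmat p q a (i+1) (r+1) * cc1 p q a n r j := rfl

lemma cc1_succ' (m i j : ℕ) (hi : 1 ≤ i) :
    cc1 p q a (m+1) (i-1) j = ∑ r ∈ range (i + q), Hmat p q a i (r+1) * cc1 p q a m r j := by
  rw [cc1_succ]
  have h1 : i - 1 + q + 1 = i + q := by omega
  have h2 : i - 1 + 1 = i := by omega
  rw [h1, h2]

lemma Hmat_0r (r : ℕ) (h : r ≤ q) : Hmat p q a 0 r = a (r : ℤ) 0 := by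
  rw [Hmat, if_pos ⟨by omega, by omega⟩]
  congr 1 <;> omega

lemma Hmat_r0 (r : ℕ) (h1 : 1 ≤ r) (h2 : r ≤ p) : Hmat p q a r 0 = a (-(r:ℤ)) 0 := by
  rw [Hmat, if_pos ⟨by omega, by omega⟩]
  congr 1 <;> omega

lemma Hmat_r0_zero (r : ℕ) (h : p < r) : Hmat p q a r 0 = 0 := by
  rw [Hmat, if_neg (by omega)]

lemma sum_Icc_one {M : Type*} [AddCommMonoid M] (f : ℕ → M) (m : ℕ) :
    ∑ r ∈ Icc 1 m, f r = ∑ r ∈ range m, f (r+1) := by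
  induction m with
  | zero => simp
  | succ k ih => rw [Finset.sum_Icc_succ_top (by omega), ih, Finset.sum_range_succ]


lemma lemC : ∀ n i, 1 ≤ i →
    cc p q a n i 0 = ∑ k ∈ range n,
      cc p q a k 0 0 *
        ∑ s ∈ Icc 1 p, a (-(s:ℤ)) 0 * cc1 p q a (n - 1 - k) (i-1) (s-1) := by
  intro n
  induction n with
  | zero =>
    intro i hi
    rw [cc_zero, if_neg (by omega)]
    simp
  | succ m ih =>
    intro i hi
    rw [cc_succ, Finset.sum_range_succ']
    -- key : the k = m term of the RHS equals Hmat i 0 * cc m 0 0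
    have key : ∑ s ∈ Icc 1 p, a (-(s:ℤ)) 0 * cc1 p q a 0 (i-1) (s-1) = Hmat p q a i 0 := by
      rcases le_or_gt i p with h | h
      · rw [Finset.sum_eq_single i]
        · rw [cc1_zero, if_pos rfl, mul_one, Hmat_r0 p q a i hi h]
        · intro s hs hne
          rw [cc1_zero, if_neg (by simp at hs; omega), mul_zero]
        · intro h'
          exact absurd (Finset.mem_Icc.mpr ⟨hi, h⟩) h'
      · rw [Hmat_r0_zero p q a i h]
        apply Finset.sum_eq_zero
        intro s hs
        rw [cc1_zero, if_neg (by simp at hs; omega), mul_zero]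
    rw [Finset.sum_range_succ]
    have e0 : m + 1 - 1 - m = 0 := by omega
    rw [e0, key]
    have step : ∀ r ∈ range (i + q), Hmat p q a i (r+1) * cc p q a m (r+1) 0
        = ∑ k ∈ range m, cc p q a k 0 0 *
            ∑ s ∈ Icc 1 p,
              a (-(s:ℤ)) 0 * (Hmat p q a i (r+1) * cc1 p q a (m - 1 - k) r (s-1)) := by
      intro r hr
      rw [ih (r+1) (by omega)]
      simp only [Finset.mul_sum]
      refine Finset.sum_congr rfl fun k hk => Finset.sum_congr rfl fun s hs => ?_
      have h6 : r + 1 - 1 = r := by omega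
      rw [h6]
      ring
    rw [Finset.sum_congr rfl step, Finset.sum_comm]
    have inner : ∀ k ∈ range m,
        (∑ r ∈ range (i + q), cc p q a k 0 0 *
            ∑ s ∈ Icc 1 p, a (-(s:ℤ)) 0 * (Hmat p q a i (r+1) * cc1 p q a (m - 1 - k) r (s-1)))
        = cc p q a k 0 0 *
            ∑ s ∈ Icc 1 p, a (-(s:ℤ)) 0 * cc1 p q a (m + 1 - 1 - k) (i-1) (s-1) := by
      intro k hk
      have h1 : m + 1 - 1 - k = (m - 1 - k) + 1 := by
        have := Finset.mem_range.mp hk; omega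
      rw [h1, ← Finset.mul_sum]
      congr 1
      rw [Finset.sum_comm]
      refine Finset.sum_congr rfl fun s hs => ?_
      rw [← Finset.mul_sum, cc1_succ' p q a (m-1-k) i (s-1) hi]
    rw [Finset.sum_congr rfl inner]
    ring

lemma lemA (j : ℕ) (hj : 1 ≤ j) : ∀ n i,
    cc p q a n i j =
      (∑ k ∈ range n, cc p q a k i 0 *
          ∑ r ∈ Icc 1 q, a (r:ℤ) 0 * cc1 p q a (n - 1 - k) (r-1) (j-1))
        + (if 1 ≤ i then cc1 p q a n (i-1) (j-1) else 0) := by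
  intro n
  induction n with
  | zero =>
    intro i
    rw [cc_zero]
    simp only [Finset.range_zero, Finset.sum_empty, zero_add]
    by_cases hi : 1 ≤ i
    · rw [if_pos hi, cc1_zero]
      by_cases hij : i = j
      · rw [if_pos hij, if_pos (by omega)]
      · rw [if_neg hij, if_neg (by omega)]
    · rw [if_neg hi, if_neg (by omega)]
  | succ n ih =>
    intro i
    rw [cc_succ]
    have expand : ∀ r ∈ range (i + q + 1), Hmat p q a i r * cc p q a n r j
        = (∑ k ∈ range n, Hmat p q a i r * (cc p q a k r 0 *
              ∑ r' ∈ Icc 1 q, a (r':ℤ) 0 * cc1 p q a (n - 1 - k) (r'-1) (j-1)))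
          + Hmat p q a i r *
              (if 1 ≤ r then cc1 p q a n (r-1) (j-1) else 0) := by
      intro r hr
      rw [ih r, mul_add, Finset.mul_sum]
    rw [Finset.sum_congr rfl expand, Finset.sum_add_distrib]
    -- part A
    have hA : (∑ r ∈ range (i + q + 1), ∑ k ∈ range n, Hmat p q a i r * (cc p q a k r 0 *
          ∑ r' ∈ Icc 1 q, a (r':ℤ) 0 * cc1 p q a (n - 1 - k) (r'-1) (j-1)))
        = ∑ k ∈ range n, cc p q a (k+1) i 0 *
            ∑ r' ∈ Icc 1 q, a (r':ℤ) 0 * cc1 p q a (n - 1 - k) (r'-1) (j-1) := by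
      rw [Finset.sum_comm]
      refine Finset.sum_congr rfl fun k hk => ?_
      rw [cc_succ, Finset.sum_mul]
      refine Finset.sum_congr rfl fun r hr => ?_
      ring
    rw [hA]
    -- part B
    have hB : (∑ r ∈ range (i + q + 1), Hmat p q a i r *
          (if 1 ≤ r then cc1 p q a n (r-1) (j-1) else 0))
        = ∑ r ∈ range (i + q), Hmat p q a i (r+1) * cc1 p q a n r (j-1) := by
      rw [Finset.sum_range_succ']
      simp
    rw [hB]
    -- RHS
    rw [Finset.sum_range_succ', cc_zero]
    have hsub : ∀ k, n + 1 - 1 - (k + 1) = n - 1 - k := by intro k; omega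
    have hRHS1 : ∀ k ∈ range n,
        cc p q a (k+1) i 0 * ∑ r' ∈ Icc 1 q, a (r':ℤ) 0
            * cc1 p q a (n + 1 - 1 - (k+1)) (r'-1) (j-1)
        = cc p q a (k+1) i 0 * ∑ r' ∈ Icc 1 q, a (r':ℤ) 0
            * cc1 p q a (n - 1 - k) (r'-1) (j-1) := by
      intro k hk
      rw [hsub k]
    rw [Finset.sum_congr rfl hRHS1]
    by_cases hi : 1 ≤ i
    · rw [if_neg (by omega), if_pos hi, zero_mul, add_zero]
      have h3 : i + q = i - 1 + q + 1 := by omega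
      rw [h3]
      have h2 : ∀ r ∈ range (i - 1 + q + 1), Hmat p q a i (r+1) * cc1 p q a n r (j-1)
          = Hmat p q a (i-1+1) (r+1) * cc1 p q a n r (j-1) := by
        intro r hr
        have h4 : i - 1 + 1 = i := by omega
        rw [h4]
      rw [Finset.sum_congr rfl h2, ← cc1_succ p q a n (i-1) (j-1)]
    · have hi0 : i = 0 := by omega
      subst hi0
      rw [if_pos rfl, one_mul, if_neg hi, add_zero]
      have key2 : (∑ r ∈ range (0 + q), Hmat p q a 0 (r+1) * cc1 p q a n r (j-1))
          = ∑ r' ∈ Icc 1 q, a (r':ℤ) 0 * cc1 p q a (n + 1 - 1 - 0) (r'-1) (j-1) := by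
        have hq0 : (0:ℕ) + q = q := by omega
        have hn0 : n + 1 - 1 - 0 = n := by omega
        rw [hq0, hn0, sum_Icc_one]
        refine Finset.sum_congr rfl fun r hr => ?_
        rw [Hmat_0r p q a (r+1) (by simp at hr; omega)]
        have h5 : r + 1 - 1 = r := by omega
        rw [h5]
      rw [key2]


lemma serA (i j : ℕ) (hj : 1 ≤ j) :
    phiSer p q a i j
      = phiSer p q a i 0 *
          (∑ r ∈ Icc 1 q, CLS (a (r:ℤ) 0) * phiSer1 p q a (r-1) (j-1))
        + (if 1 ≤ i then phiSer1 p q a (i-1) (j-1) else 0) := by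
  have hT : (∑ r ∈ Icc 1 q, CLS (a (r:ℤ) 0) * phiSer1 p q a (r-1) (j-1))
      = gen (fun m => ∑ r ∈ Icc 1 q, a (r:ℤ) 0 * cc1 p q a m (r-1) (j-1)) := by
    rw [← gen_sum]
    refine Finset.sum_congr rfl fun r _ => ?_
    rw [phiSer1_apply, CLS_mul_gen]
  rw [phiSer_apply, phiSer_apply, hT, gen_mul_gen]
  by_cases hi : 1 ≤ i
  · rw [if_pos hi, phiSer1_apply, gen_add]
    congr 1
    funext n
    rw [lemA p q a j hj n i, if_pos hi]
  · rw [if_neg hi, add_zero]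
    congr 1
    funext n
    rw [lemA p q a j hj n i, if_neg hi, add_zero]

lemma serC (i : ℕ) (hi : 1 ≤ i) :
    phiSer p q a i 0 = phiSer p q a 0 0 *
      ∑ s ∈ Icc 1 p, CLS (a (-(s:ℤ)) 0) * phiSer1 p q a (i-1) (s-1) := by
  have hU : (∑ s ∈ Icc 1 p, CLS (a (-(s:ℤ)) 0) * phiSer1 p q a (i-1) (s-1))
      = gen (fun m => ∑ s ∈ Icc 1 p, a (-(s:ℤ)) 0 * cc1 p q a m (i-1) (s-1)) := by
    rw [← gen_sum]
    refine Finset.sum_congr rfl fun s _ => ?_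
    rw [phiSer1_apply, CLS_mul_gen]
  rw [phiSer_apply, phiSer_apply, hU, gen_mul_gen]
  congr 1
  funext n
  exact lemC p q a n i hi

lemma keyI (n : ℕ) :
    cc p q a (n+1) 0 0
      = a 0 0 * cc p q a n 0 0
        + ∑ k ∈ range n, cc p q a k 0 0 *
            ∑ i ∈ Icc 1 q, ∑ j ∈ Icc 1 p,
              a (i:ℤ) 0 * a (-(j:ℤ)) 0 * cc1 p q a (n - 1 - k) (i-1) (j-1) := by
  rw [cc_succ, Finset.sum_range_succ']
  have hq0 : (0:ℕ) + q = q := by omega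
  rw [hq0]
  have h00 : Hmat p q a 0 0 = a 0 0 := by
    rw [Hmat_0r p q a 0 (by omega)]
    norm_num
  rw [h00]
  have step : ∀ r ∈ range q, Hmat p q a 0 (r+1) * cc p q a n (r+1) 0
      = ∑ k ∈ range n, cc p q a k 0 0 *
          ∑ s ∈ Icc 1 p,
            a ((r+1 : ℕ):ℤ) 0 * a (-(s:ℤ)) 0 * cc1 p q a (n - 1 - k) r (s-1) := by
    intro r hr
    rw [Hmat_0r p q a (r+1) (by simp at hr; omega), lemC p q a n (r+1) (by omega)]
    simp only [Finset.mul_sum]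
    refine Finset.sum_congr rfl fun k hk => Finset.sum_congr rfl fun s hs => ?_
    have h6 : r + 1 - 1 = r := by omega
    rw [h6]
    ring
  rw [Finset.sum_congr rfl step, Finset.sum_comm]
  have inner : ∀ k ∈ range n,
      (∑ r ∈ range q, cc p q a k 0 0 *
          ∑ s ∈ Icc 1 p,
            a ((r+1 : ℕ):ℤ) 0 * a (-(s:ℤ)) 0 * cc1 p q a (n - 1 - k) r (s-1))
      = cc p q a k 0 0 *
          ∑ i ∈ Icc 1 q, ∑ s ∈ Icc 1 p,
            a (i:ℤ) 0 * a (-(s:ℤ)) 0 * cc1 p q a (n - 1 - k) (i-1) (s-1) := by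
    intro k hk
    rw [← Finset.mul_sum]
    congr 1
    rw [sum_Icc_one (fun i => ∑ s ∈ Icc 1 p,
      a (i:ℤ) 0 * a (-(s:ℤ)) 0 * cc1 p q a (n - 1 - k) (i-1) (s-1)) q]
    refine Finset.sum_congr rfl fun r hr => Finset.sum_congr rfl fun s hs => ?_
    have h6 : r + 1 - 1 = r := by omega
    rw [h6]
  rw [Finset.sum_congr rfl inner]
  ring


/-- **Theorem 4.2**: relations between the resolvent series of `H` and of `H^{[1]}`. -/
theorem theorem3_resolvent_relations
    (p q : ℕ) (hp : 1 ≤ p) (hq : 1 ≤ q) (a : ℤ → ℤ → ℂ) :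
    (phiSer p q a 0 0 *
        (zLS - CLS (a 0 0) -
          ∑ i ∈ Finset.Icc 1 q, ∑ j ∈ Finset.Icc 1 p,
            CLS (a (i : ℤ) 0) * CLS (a (-(j : ℤ)) 0) * phiSer1 p q a (i - 1) (j - 1)) = 1) ∧
    (∀ j : ℕ, 1 ≤ j →
      phiSer p q a 0 j =
        phiSer p q a 0 0 *
          ∑ i ∈ Finset.Icc 1 q, CLS (a (i : ℤ) 0) * phiSer1 p q a (i - 1) (j - 1)) ∧
    (∀ i : ℕ, 1 ≤ i →
      phiSer p q a i 0 =
        phiSer p q a 0 0 *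
          ∑ j ∈ Finset.Icc 1 p, CLS (a (-(j : ℤ)) 0) * phiSer1 p q a (i - 1) (j - 1)) ∧
    (∀ i j : ℕ, 1 ≤ i → 1 ≤ j →
      phiSer p q a 0 0 * phiSer p q a i j =
        phiSer p q a i 0 * phiSer p q a 0 j +
          phiSer p q a 0 0 * phiSer1 p q a (i - 1) (j - 1)) := by
  refine ⟨?_, ?_, ?_, ?_⟩
  · have hD : (∑ i ∈ Finset.Icc 1 q, ∑ j ∈ Finset.Icc 1 p,
          CLS (a (i:ℤ) 0) * CLS (a (-(j:ℤ)) 0) * phiSer1 p q a (i-1) (j-1))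
        = gen (fun m => ∑ i ∈ Icc 1 q, ∑ j ∈ Icc 1 p,
            a (i:ℤ) 0 * a (-(j:ℤ)) 0 * cc1 p q a m (i-1) (j-1)) := by
      rw [← gen_sum]
      refine Finset.sum_congr rfl fun i _ => ?_
      rw [← gen_sum]
      refine Finset.sum_congr rfl fun j _ => ?_
      rw [phiSer1_apply, mul_assoc, CLS_mul_gen, CLS_mul_gen]
      congr 1
      funext n
      ring
    rw [hD, phiSer_apply, mul_sub, mul_sub,
      mul_comm (gen fun n => cc p q a n 0 0) zLS, zLS_mul_gen,
      mul_comm (gen fun n => cc p q a n 0 0) (CLS (a 0 0)), CLS_mul_gen,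
      gen_mul_gen]
    have hc0 : cc p q a 0 0 0 = (1:ℂ) := by rw [cc_zero, if_pos rfl]
    rw [hc0, CLS_one]
    have hABC : gen (fun n => cc p q a (n+1) 0 0)
        = gen (fun n => a 0 0 * cc p q a n 0 0)
          + gen (fun n => ∑ k ∈ range n, cc p q a k 0 0 *
              ∑ i ∈ Icc 1 q, ∑ j ∈ Icc 1 p,
                a (i:ℤ) 0 * a (-(j:ℤ)) 0 * cc1 p q a (n - 1 - k) (i-1) (j-1)) := by
      rw [gen_add]
      congr 1
      funext n
      exact keyI p q a n
    rw [hABC]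
    ring
  · intro j hj
    rw [serA p q a 0 j hj, if_neg (by omega), add_zero]
  · intro i hi
    exact serC p q a i hi
  · intro i j hi hj
    have h1 := serA p q a i j hj
    rw [if_pos hi] at h1
    have h2 := serA p q a 0 j hj
    rw [if_neg (by omega), add_zero] at h2
    rw [h1, h2]
    ring
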